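/- Let B ∈ ℝ^{n×n} be symmetric positive definite and let s, γ ∈ ℝⁿ with s ≠ 0 and γᵀs > 0. Define ψ(A) := trace(A) − ln det(A) for positive definite A, cos β := (sᵀBs)/(‖s‖ ‖Bs‖), q := (sᵀBs)/‖s‖², a := (γᵀs)/‖s‖², b := ‖γ‖²/(γᵀs), and let B⁺ be the BFGS-type update of B with (s, γ). Then ψ(B⁺) = ψ(B) + (b − ln a − 1) + ln(cos²β) + [1 − q/cos²β + ln(q/cos²β)]. -/

import Mathlib

open RealInnerProductSpace

noncomputable section

abbrev E (n : ℕ) := EuclideanSpace ℝ (Fin n)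

def quad {n : ℕ} (B : Matrix (Fin n) (Fin n) ℝ) (d : E n) : ℝ :=
  ∑ i, ∑ j, d i * B i j * d j

def mulVecE {n : ℕ} (B : Matrix (Fin n) (Fin n) ℝ) (v : E n) : E n :=
  Matrix.toEuclideanLin B v

def outer {n : ℕ} (u v : E n) : Matrix (Fin n) (Fin n) ℝ :=
  Matrix.of fun i j => u i * v j

def bfgsUpdate {n : ℕ} (B : Matrix (Fin n) (Fin n) ℝ) (s γ : E n) :
    Matrix (Fin n) (Fin n) ℝ :=
  B - (quad B s)⁻¹ • (B * outer s s * B) + (⟪γ, s⟫)⁻¹ • outer γ γ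

namespace Stmt18Aux

open Matrix

variable {n : ℕ}

lemma sandwich (B : Matrix (Fin n) (Fin n) ℝ) (hsy : ∀ i j, B i j = B j i) (u : Fin n → ℝ) :
    B * Matrix.of (fun i j => u i * u j) * B
      = Matrix.of fun i k => (B *ᵥ u) i * (B *ᵥ u) k := by
  ext i k
  simp only [Matrix.mul_apply, Matrix.of_apply, Matrix.mulVec, dotProduct]
  simp_rw [Finset.sum_mul]
  rw [Finset.sum_comm]
  refine Finset.sum_congr rfl fun m _ => ?_
  rw [Finset.mul_sum]
  refine Finset.sum_congr rfl fun l _ => ?_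
  rw [hsy l k]; ring

lemma trace_outer (v w : Fin n → ℝ) :
    (Matrix.of fun i j => v i * w j).trace = v ⬝ᵥ w := rfl

lemma entry3 (X : Matrix (Fin n) (Fin n) ℝ) (vr : Fin 2 → Fin n → ℝ) (vc : Fin 2 → Fin n → ℝ)
    (a b : Fin 2) :
    ((Matrix.of fun j i => vr j i) * X * (Matrix.of fun i j => vc j i)) a b
      = vr a ⬝ᵥ X *ᵥ vc b := by
  simp only [Matrix.mul_apply, Matrix.of_apply, Matrix.mulVec, dotProduct]
  simp_rw [Finset.sum_mul, Finset.mul_sum]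
  rw [Finset.sum_comm]
  exact Finset.sum_congr rfl fun m _ => Finset.sum_congr rfl fun l _ => by ring

lemma det_update (B : Matrix (Fin n) (Fin n) ℝ) (hB : B.PosDef) (u g : Fin n → ℝ)
    (hσ : u ⬝ᵥ B *ᵥ u ≠ 0) (hτ : g ⬝ᵥ u ≠ 0) :
    (B - (u ⬝ᵥ B *ᵥ u)⁻¹ • Matrix.of (fun i j => (B *ᵥ u) i * (B *ᵥ u) j)
       + (g ⬝ᵥ u)⁻¹ • Matrix.of (fun i j => g i * g j)).det
      = B.det * ((g ⬝ᵥ u) / (u ⬝ᵥ B *ᵥ u)) := by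
  have hsy : ∀ i j, B i j = B j i := fun i j => by
    conv_lhs => rw [← hB.1]
    rfl
  set σ : ℝ := u ⬝ᵥ B *ᵥ u with hσdef
  set τ : ℝ := g ⬝ᵥ u with hτdef
  have hdet : IsUnit B.det := hB.det_pos.ne'.isUnit
  set vc : Fin 2 → Fin n → ℝ := ![(-σ⁻¹) • (B *ᵥ u), τ⁻¹ • g] with hvc
  set vr : Fin 2 → Fin n → ℝ := ![B *ᵥ u, g] with hvr
  set U : Matrix (Fin n) (Fin 2) ℝ := Matrix.of fun i j => vc j i with hU
  set V : Matrix (Fin 2) (Fin n) ℝ := Matrix.of fun j i => vr j i with hV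
  have hM : B - σ⁻¹ • Matrix.of (fun i j => (B *ᵥ u) i * (B *ᵥ u) j)
       + τ⁻¹ • Matrix.of (fun i j => g i * g j) = B + U * V := by
    ext i k
    simp only [Matrix.add_apply, Matrix.sub_apply, Matrix.smul_apply, Matrix.of_apply,
      Matrix.mul_apply, hU, hV, Fin.sum_univ_two, hvc, hvr, Matrix.cons_val_zero,
      Matrix.cons_val_one, Matrix.head_cons, Pi.smul_apply, smul_eq_mul]
    ring
  rw [hM, Matrix.det_add_mul U V hdet]
  congr 1
  -- compute the 2×2 determinant
  have hBinv : B⁻¹ *ᵥ (B *ᵥ u) = u := by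
    rw [Matrix.mulVec_mulVec, Matrix.nonsing_inv_mul B hdet, Matrix.one_mulVec]
  have hBig : (B *ᵥ u) ⬝ᵥ B⁻¹ *ᵥ g = u ⬝ᵥ g := by
    rw [Matrix.dotProduct_mulVec]
    congr 1
    have hT : Bᵀ = B := by ext i j; exact hsy j i
    have htr : (B⁻¹)ᵀ = B⁻¹ := by rw [Matrix.transpose_nonsing_inv, hT]
    calc (B *ᵥ u) ᵥ* B⁻¹ = (B⁻¹)ᵀ *ᵥ (B *ᵥ u) := by rw [Matrix.mulVec_transpose]
    _ = u := by rw [htr, hBinv]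
  have he : ∀ a b, (V * B⁻¹ * U) a b = vr a ⬝ᵥ B⁻¹ *ᵥ vc b := fun a b =>
    entry3 B⁻¹ vr vc a b
  rw [Matrix.det_fin_two]
  simp only [Matrix.add_apply, he, hvr, hvc, Matrix.cons_val_zero, Matrix.cons_val_one,
    Matrix.head_cons, Matrix.mulVec_smul, dotProduct_smul, hBinv, hBig,
    Matrix.one_apply_eq, Matrix.one_apply_ne (by decide : (0 : Fin 2) ≠ 1),
    Matrix.one_apply_ne (by decide : (1 : Fin 2) ≠ 0), smul_eq_mul]
  rw [dotProduct_comm (B *ᵥ u) u, dotProduct_comm u g]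
  rw [← hσdef, ← hτdef]
  field_simp
  ring

end Stmt18Aux

open Matrix in
/-- the trace−log-det potential identity for the BFGS-type update. -/
theorem stmt18 {n : ℕ} (B : Matrix (Fin n) (Fin n) ℝ) (hB : B.PosDef)
    (s γ : E n) (hs : s ≠ 0) (hγs : 0 < ⟪γ, s⟫)
    (cosβ q a b : ℝ)
    (hcos : cosβ = quad B s / (‖s‖ * ‖mulVecE B s‖))
    (hq : q = quad B s / ‖s‖ ^ 2)
    (ha : a = ⟪γ, s⟫ / ‖s‖ ^ 2)
    (hb : b = ‖γ‖ ^ 2 / ⟪γ, s⟫) :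
    (bfgsUpdate B s γ).trace - Real.log (bfgsUpdate B s γ).det =
      (B.trace - Real.log B.det) + (b - Real.log a - 1) + Real.log (cosβ ^ 2) +
        (1 - q / cosβ ^ 2 + Real.log (q / cosβ ^ 2)) := by
  classical
  have hsy : ∀ i j, B i j = B j i := fun i j => by
    conv_lhs => rw [← hB.1]
    rfl
  set s' : Fin n → ℝ := (WithLp.equiv 2 _) s with hs'def
  set g' : Fin n → ℝ := (WithLp.equiv 2 _) γ with hg'def
  set σ : ℝ := s' ⬝ᵥ B *ᵥ s' with hσdef
  set τ : ℝ := g' ⬝ᵥ s' with hτdef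
  set N : ℝ := (B *ᵥ s') ⬝ᵥ (B *ᵥ s') with hNdef
  set S : ℝ := s' ⬝ᵥ s' with hSdef
  set G : ℝ := g' ⬝ᵥ g' with hGdef
  -- identifications
  have h1 : quad B s = σ := by
    simp only [hσdef, quad, dotProduct, Matrix.mulVec, Finset.mul_sum, mul_assoc]
    rfl
  have h2 : ⟪γ, s⟫ = τ := by
    simp only [hτdef, PiLp.inner_apply, dotProduct, RCLike.inner_apply, conj_trivial]
    exact Finset.sum_congr rfl fun i _ => mul_comm _ _
  have h3 : ‖s‖ ^ 2 = S := by
    rw [← real_inner_self_eq_norm_sq]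
    simp only [hSdef, PiLp.inner_apply, dotProduct, RCLike.inner_apply, conj_trivial]
    rfl
  have h4 : ‖mulVecE B s‖ ^ 2 = N := by
    rw [← real_inner_self_eq_norm_sq]
    simp only [hNdef, mulVecE, PiLp.inner_apply, dotProduct, RCLike.inner_apply,
      conj_trivial, Matrix.toEuclideanLin_apply]
    rfl
  have h5 : ‖γ‖ ^ 2 = G := by
    rw [← real_inner_self_eq_norm_sq]
    simp only [hGdef, PiLp.inner_apply, dotProduct, RCLike.inner_apply, conj_trivial]
    rfl
  -- positivity
  have hσ : 0 < σ := by
    have := hB.dotProduct_mulVec_pos (x := s') (by simpa [hs'def] using hs)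
    simpa using this
  have hτ : 0 < τ := by rw [← h2]; exact hγs
  have hS : 0 < S := by
    rw [← h3]; exact pow_pos (norm_pos_iff.mpr hs) 2
  have hD : 0 < B.det := hB.det_pos
  have hN : 0 < N := by
    rcases eq_or_ne (B *ᵥ s') 0 with h | h
    · exfalso
      have : σ = 0 := by rw [hσdef, h, dotProduct_zero]
      linarith
    · obtain ⟨i, hi⟩ := Function.ne_iff.mp h
      have hNsum : N = ∑ i, ((B *ᵥ s') i) ^ 2 := by
        simp [hNdef, dotProduct, sq]
      rw [hNsum]
      exact Finset.sum_pos' (fun j _ => sq_nonneg _)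
        ⟨i, Finset.mem_univ i, by have h2 : (B *ᵥ s') i ≠ 0 := hi; positivity⟩
  -- structure of the update
  have houter_s : outer s s = Matrix.of fun i j => s' i * s' j := rfl
  have houter_g : outer γ γ = Matrix.of fun i j => g' i * g' j := rfl
  have hupdate : bfgsUpdate B s γ
      = B - σ⁻¹ • Matrix.of (fun i j => (B *ᵥ s') i * (B *ᵥ s') j)
          + τ⁻¹ • Matrix.of (fun i j => g' i * g' j) := by
    rw [bfgsUpdate, houter_s, houter_g, Stmt18Aux.sandwich B hsy s', h1, h2]
  have htrace : (bfgsUpdate B s γ).trace = B.trace - σ⁻¹ * N + τ⁻¹ * G := by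
    rw [hupdate, Matrix.trace_add, Matrix.trace_sub, Matrix.trace_smul, Matrix.trace_smul,
      Stmt18Aux.trace_outer, Stmt18Aux.trace_outer, ← hNdef, ← hGdef, smul_eq_mul, smul_eq_mul]
  have hdet : (bfgsUpdate B s γ).det = B.det * (τ / σ) := by
    rw [hupdate]
    exact Stmt18Aux.det_update B hB s' g' hσ.ne' hτ.ne'
  -- scalar identifications
  have hcos2 : cosβ ^ 2 = σ ^ 2 / (S * N) := by
    rw [hcos, h1, div_pow, mul_pow, h3, h4]
  have hqv : q = σ / S := by rw [hq, h1, h3]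
  have hav : a = τ / S := by rw [ha, h2, h3]
  have hbv : b = G / τ := by rw [hb, h2, h5]
  have hqc : q / cosβ ^ 2 = N / σ := by
    rw [hqv, hcos2]
    field_simp
  rw [htrace, hdet, hqc, hav, hbv, hcos2]
  rw [Real.log_mul hD.ne' (div_pos hτ hσ).ne', Real.log_div hτ.ne' hσ.ne',
    Real.log_div hτ.ne' hS.ne', Real.log_div (by positivity) (by positivity : S * N ≠ 0),
    Real.log_div hN.ne' hσ.ne', Real.log_mul hS.ne' hN.ne', Real.log_pow]
  ring
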